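/- Suppose in addition the unit-speed condition x'(t)² + y'(t)² = y(t)² e^{2ε·x(t)} holds for all t ∈ J. Then the normalized velocity v_x(t) := x'(t)/(y(t)² e^{2ε·x(t)}) is differentiable on J with v_x'(t) = −ε for all t ∈ J; consequently v_x(t) = v_x(t₀) − ε(t − t₀) for all t, t₀ ∈ J. -/

import Mathlib

theorem stmt_13 (ε : ℝ) (J : Set ℝ) (hJ : J.OrdConnected)
    (x y x' y' x'' y'' : ℝ → ℝ)
    (hx : ∀ t ∈ J, HasDerivWithinAt x (x' t) J t)
    (hx' : ∀ t ∈ J, HasDerivWithinAt x' (x'' t) J t)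
    (hy : ∀ t ∈ J, HasDerivWithinAt y (y' t) J t)
    (hy' : ∀ t ∈ J, HasDerivWithinAt y' (y'' t) J t)
    (hypos : ∀ t ∈ J, 0 < y t)
    (hgeo1 : ∀ t ∈ J,
      x'' t - (2 / y t) * x' t * y' t - ε * ((x' t) ^ 2 - (y' t) ^ 2) = 0)
    (hgeo2 : ∀ t ∈ J,
      y'' t + (1 / y t) * ((x' t) ^ 2 - (y' t) ^ 2) - 2 * ε * x' t * y' t = 0)
    (hunit : ∀ t ∈ J,
      (x' t) ^ 2 + (y' t) ^ 2 = (y t) ^ 2 * Real.exp (2 * ε * x t)) :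
    (∀ t ∈ J, HasDerivWithinAt
        (fun s => x' s / ((y s) ^ 2 * Real.exp (2 * ε * x s))) (-ε) J t) ∧
    ∀ t ∈ J, ∀ t₀ ∈ J,
      x' t / ((y t) ^ 2 * Real.exp (2 * ε * x t)) =
        x' t₀ / ((y t₀) ^ 2 * Real.exp (2 * ε * x t₀)) - ε * (t - t₀) := by
  have hDpos : ∀ t ∈ J, 0 < (y t) ^ 2 * Real.exp (2 * ε * x t) := fun t ht =>
    mul_pos (pow_pos (hypos t ht) 2) (Real.exp_pos _)
  have hderiv : ∀ t ∈ J, HasDerivWithinAt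
      (fun s => x' s / ((y s) ^ 2 * Real.exp (2 * ε * x s))) (-ε) J t := by
    intro t ht
    have hD : HasDerivWithinAt (fun s => (y s) ^ 2 * Real.exp (2 * ε * x s))
        ((2 * y t * y' t) * Real.exp (2 * ε * x t)
          + (y t) ^ 2 * (Real.exp (2 * ε * x t) * (2 * ε * x' t))) J t := by
      have h1 : HasDerivWithinAt (fun s => (y s) ^ 2) (2 * y t * y' t) J t := by
        have := (hy t ht).fun_pow 2
        simpa [mul_comm, mul_assoc, mul_left_comm] using this
      have h2 : HasDerivWithinAt (fun s => Real.exp (2 * ε * x s))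
          (Real.exp (2 * ε * x t) * (2 * ε * x' t)) J t := by
        have hin : HasDerivWithinAt (fun s => 2 * ε * x s) (2 * ε * x' t) J t := by
          simpa [mul_assoc] using (hx t ht).const_mul (2 * ε)
        simpa [Function.comp_def] using (Real.hasDerivAt_exp (2 * ε * x t)).comp_hasDerivWithinAt t hin
      simpa [mul_comm, mul_assoc, mul_left_comm] using h1.fun_mul h2
    have hne : (y t) ^ 2 * Real.exp (2 * ε * x t) ≠ 0 := (hDpos t ht).ne'
    have hdiv := (hx' t ht).fun_div hD hne
    refine hdiv.congr_deriv (Eq.symm ?_)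
    have hy0 : y t ≠ 0 := (hypos t ht).ne'
    have hx'' : x'' t = (2 / y t) * x' t * y' t + ε * ((x' t) ^ 2 - (y' t) ^ 2) := by
      have := hgeo1 t ht; linarith
    have hu := hunit t ht
    rw [hx'']
    field_simp
    linear_combination (norm := ring_nf) (ε * y t) * hu
  refine ⟨hderiv, fun t ht t₀ ht₀ => ?_⟩
  set f : ℝ → ℝ := fun s => x' s / ((y s) ^ 2 * Real.exp (2 * ε * x s)) + ε * s with hf
  have hfd : ∀ s ∈ J, HasDerivWithinAt f 0 J s := by
    intro s hs
    have := (hderiv s hs).fun_add ((hasDerivWithinAt_id s J).const_mul ε)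
    simpa [f] using this
  have hconv : Convex ℝ J := hJ.convex
  have key := hconv.norm_image_sub_le_of_norm_hasDerivWithin_le (C := 0) hfd
    (fun s hs => by simp) ht₀ ht
  have : f t = f t₀ := by
    have : ‖f t - f t₀‖ ≤ 0 := by simpa using key
    have := norm_le_zero_iff.mp this
    linarith [sub_eq_zero.mp this]
  simp only [f] at this
  linarith
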